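/- Let $R$ and $I$ be real symmetric $n \times n$ matrices with $R$ positive definite, and set $C = R + iI$ (a complex symmetric matrix). Then $C$ is invertible and the real part of its inverse satisfies $\mathrm{Re}(C^{-1}) = \left( R + I R^{-1} I \right)^{-1}$. In particular $\mathrm{Re}(C^{-1})$ is positive definite. -/

import Mathlib

open Matrix

/-- For `C = R + iI` with `R` real symmetric positive definite and `I` real symmetric,
`C` is invertible, `Re (C⁻¹) = (R + I R⁻¹ I)⁻¹`, and `Re (C⁻¹)` is positive definite. -/
theorem re_inv_of_complex_symmetric {n : Type*} [Fintype n] [DecidableEq n]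
    (R I : Matrix n n ℝ) (hR : R.PosDef) (hI : I.IsHermitian)
    (C : Matrix n n ℂ)
    (hC : C = R.map (Complex.ofReal) + Complex.I • I.map (Complex.ofReal)) :
    IsUnit C.det ∧ C⁻¹.map Complex.re = (R + I * R⁻¹ * I)⁻¹ ∧
      (C⁻¹.map Complex.re).PosDef := by
  set S := R + I * R⁻¹ * I with hSdef
  have hIRI : (I * R⁻¹ * I).PosSemidef := by
    have := hR.inv.posSemidef.conjTranspose_mul_mul_same I
    rwa [show Iᴴ = I from hI] at this
  have hS : S.PosDef := hR.add_posSemidef hIRI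
  have hRdet : IsUnit R.det := isUnit_iff_isUnit_det R |>.1 hR.isUnit
  have hSdet : IsUnit S.det := isUnit_iff_isUnit_det S |>.1 hS.isUnit
  -- the candidate inverse
  set D : Matrix n n ℂ := (S⁻¹).map Complex.ofReal
      - Complex.I • ((R⁻¹ * I * S⁻¹).map Complex.ofReal) with hDdef
  have hmap : ∀ (A B : Matrix n n ℝ),
      (A.map (Complex.ofReal)) * (B.map (Complex.ofReal)) = (A * B).map Complex.ofReal := by
    intro A B
    exact (Matrix.map_mul (f := Complex.ofRealHom)).symm
  have hCD : C * D = 1 := by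
    rw [hC, hDdef]
    rw [add_mul, mul_sub, mul_sub, smul_mul_assoc, smul_mul_assoc, mul_smul_comm, mul_smul_comm]
    rw [hmap, hmap, hmap, hmap]
    have h1 : R * (R⁻¹ * I * S⁻¹) = I * S⁻¹ := by
      rw [← Matrix.mul_assoc, ← Matrix.mul_assoc, Matrix.mul_nonsing_inv _ hRdet,
        Matrix.one_mul]
    have h2 : R * S⁻¹ + I * (R⁻¹ * I * S⁻¹) = 1 := by
      rw [← Matrix.mul_assoc, ← Matrix.mul_assoc, ← Matrix.add_mul]
      rw [show R + I * R⁻¹ * I = S from rfl, Matrix.mul_nonsing_inv _ hSdet]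
    rw [h1, smul_smul, Complex.I_mul_I, neg_one_smul]
    ext i j
    have h2' : (R * S⁻¹) i j + (I * (R⁻¹ * I * S⁻¹)) i j = (1 : Matrix n n ℝ) i j := by
      rw [← Matrix.add_apply, h2]
    have hone : (1 : Matrix n n ℂ) i j = Complex.ofReal ((1 : Matrix n n ℝ) i j) := by
      simp [Matrix.one_apply, apply_ite]
    simp only [Matrix.add_apply, Matrix.sub_apply, Matrix.neg_apply, Matrix.smul_apply,
      Matrix.map_apply, smul_eq_mul, hone, ← h2']
    push_cast
    ring
  have hdet : IsUnit C.det := by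
    have := Matrix.det_mul C D
    rw [hCD, Matrix.det_one] at this
    exact IsUnit.of_mul_eq_one _ this.symm
  have hCinv : C⁻¹ = D := Matrix.inv_eq_right_inv hCD
  have hre : C⁻¹.map Complex.re = S⁻¹ := by
    rw [hCinv]
    ext i j
    simp [hDdef, Matrix.sub_apply, Matrix.smul_apply, Matrix.map_apply, Complex.I_mul_re]
  exact ⟨hdet, by rw [hre], by rw [hre]; exact hS.inv⟩
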